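/- Let (A, ⊠, I) be a monoidal abelian category admitting sequential colimits, whose monoidal product preserves sequential colimits and reflexive coequalizers. For an object V set V₊ = I ⊕ V and Vₙ = V₊^{⊠n}. Define τ : V → V₂ as the composite V ≅ (I⊠V) ⊕ (V⊠I) → (I⊕V)⊠(I⊕V) given by η⊠i_V − i_V⊠η, and for 0 ≤ i ≤ n−2 let R_{i,n−i−2} ⊆ Vₙ be the image of V_i ⊠ (V̲ ⊕ V₂) ⊠ V_{n−i−2} under V_i ⊠ (τ + id_{V₂}) ⊠ V_{n−i−2}. Then the degeneracy maps η_i : Vₙ → V_{n+1} (inserting the unit at position i) all induce one and the same map η̃ on the quotients Ṽₙ = Vₙ / Σ_i R_{i,n−i−2}. -/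

import Mathlib

open CategoryTheory Limits MonoidalCategory

section FreeMonoidConstruction

variable {𝒜 : Type*} [Category 𝒜] [Abelian 𝒜] [MonoidalCategory 𝒜]

/-- A functor preserves reflexive coequalizers if it preserves coequalizers of
every reflexive pair. -/
def PreservesReflexiveCoequalizersFun {𝒜 : Type*} [Category 𝒜] {ℬ : Type*} [Category ℬ]
    (Γ : 𝒜 ⥤ ℬ) : Prop :=
  ∀ ⦃X Y : 𝒜⦄ (d₀ d₁ : X ⟶ Y), IsReflexivePair d₀ d₁ →
    PreservesColimit (parallelPair d₀ d₁) Γ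

/-- Tensor powers: `pow W n = W^{⊠n}`, with `pow W 0 = I`. -/
def pow (W : 𝒜) : ℕ → 𝒜
  | 0 => 𝟙_ 𝒜
  | n + 1 => W ⊗ pow W n

/-- The concatenation isomorphism `W^{⊠n} ⊠ W^{⊠m} ≅ W^{⊠(n+m)}`. -/
def concat (W : 𝒜) : ∀ n m : ℕ, pow W n ⊗ pow W m ≅ pow W (n + m)
  | 0, m => λ_ (pow W m) ≪≫ eqToIso (congrArg (pow W) (Nat.zero_add m).symm)
  | n + 1, m =>
    α_ W (pow W n) (pow W m) ≪≫ whiskerLeftIso W (concat W n m) ≪≫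
      eqToIso (congrArg (pow W) (Nat.succ_add n m).symm)

/-- The augmented object `V₊ = I ⊕ V`. -/
noncomputable def Vp (V : 𝒜) : 𝒜 := 𝟙_ 𝒜 ⊞ V

/-- `Vₙ = (V₊)^{⊠ n}`. -/
noncomputable def Vob (V : 𝒜) (n : ℕ) : 𝒜 := pow (Vp V) n

/-- The unit `η : I ⟶ V₊`. -/
noncomputable def etaV (V : 𝒜) : 𝟙_ 𝒜 ⟶ Vp V := biprod.inl

/-- The degeneracy map `η_i : Vₙ ⟶ V_{n+1}` inserting the unit at position `i`. -/
noncomputable def ins (V : 𝒜) : ∀ n : ℕ, ℕ → (Vob V n ⟶ Vob V (n + 1))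
  | n, 0 => (λ_ (Vob V n)).inv ≫ (etaV V ▷ Vob V n)
  | 0, _ + 1 => (λ_ (Vob V 0)).inv ≫ (etaV V ▷ Vob V 0)
  | n + 1, i + 1 => Vp V ◁ ins V n i

/-- The map `τ : V ⟶ V₂`, given by `η ⊠ i_V − i_V ⊠ η`. -/
noncomputable def tauV (V : 𝒜) : V ⟶ Vob V 2 :=
  ((λ_ V).inv ≫ ((biprod.inl : 𝟙_ 𝒜 ⟶ Vp V) ⊗ₘ (biprod.inr : V ⟶ Vp V)) -
    (ρ_ V).inv ≫ ((biprod.inr : V ⟶ Vp V) ⊗ₘ (biprod.inl : 𝟙_ 𝒜 ⟶ Vp V))) ≫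
    (Vp V ◁ (ρ_ (Vp V)).inv)

/-- The source of the relation `R_{i,j} ⊆ V_{i+2+j}`: the multilinear part
`V_i ⊠ (V̲ ⊕ V₂) ⊠ V_j`, i.e. the kernel of `V_i ⊠ π_{V₂} ⊠ V_j`. -/
noncomputable def Kob (V : 𝒜) (i j : ℕ) : 𝒜 :=
  kernel (Vob V i ◁ ((biprod.snd : V ⊞ Vob V 2 ⟶ Vob V 2) ▷ Vob V j))

/-- The map whose image is the relation `R_{i,j}`: the composite of the
multilinear part inclusion with `V_i ⊠ (τ + id_{V₂}) ⊠ V_j` and the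
concatenation isomorphisms. -/
noncomputable def rmap (V : 𝒜) (i j : ℕ) : Kob V i j ⟶ Vob V (i + (2 + j)) :=
  kernel.ι _ ≫
    (Vob V i ◁ (biprod.desc (tauV V) (𝟙 (Vob V 2)) ▷ Vob V j)) ≫
    (Vob V i ◁ (concat (Vp V) 2 j).hom) ≫ (concat (Vp V) i (2 + j)).hom

/-- The total relation map `⊕_{i=0}^{n-2} R_{i,n-i-2} ⟶ Vₙ`. -/
noncomputable def bigR (V : 𝒜) (n : ℕ) :
    (∐ fun i : Fin (n - 1) => Kob V i.val (n - 2 - i.val)) ⟶ Vob V n :=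
  Sigma.desc fun i =>
    rmap V i.val (n - 2 - i.val) ≫
      eqToHom (congrArg (Vob V) (by have := i.isLt; omega))

/-- The quotient `Ṽₙ = Vₙ / (Σᵢ R_{i,n-i-2})`. -/
noncomputable def Vtil (V : 𝒜) (n : ℕ) : 𝒜 := cokernel (bigR V n)

/-- The quotient map `πₙ : Vₙ ⟶ Ṽₙ`. -/
noncomputable def projV (V : 𝒜) (n : ℕ) : Vob V n ⟶ Vtil V n := cokernel.π _

end FreeMonoidConstruction

set_option linter.unusedSectionVars false

section Aux
variable {𝒜 : Type*} [Category 𝒜] [Abelian 𝒜] [MonoidalCategory 𝒜] (V : 𝒜)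

lemma ins_zero (n : ℕ) : ins V n 0 = (λ_ (Vob V n)).inv ≫ (etaV V ▷ Vob V n) := by
  cases n <;> rfl

lemma ins_succ (n i : ℕ) : ins V (n+1) (i+1) = Vp V ◁ ins V n i := rfl

lemma ins_congr {n n' i i' : ℕ} (h : n = n') (h2 : i = i') :
    ins V n i = eqToHom (congrArg (Vob V) h) ≫ ins V n' i' ≫
      eqToHom (congrArg (Vob V) (congrArg (· + 1) h.symm)) := by
  subst h; subst h2; simp
lemma concat_zero_hom (W : 𝒜) (m : ℕ) :
    (concat W 0 m).hom = (λ_ (pow W m)).hom ≫ eqToHom (congrArg (pow W) (Nat.zero_add m).symm) := rfl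

lemma concat_zero_inv (W : 𝒜) (m : ℕ) :
    (concat W 0 m).inv = eqToHom (congrArg (pow W) (Nat.zero_add m)) ≫ (λ_ (pow W m)).inv := by
  simp [concat]; rfl

lemma concat_succ_hom (W : 𝒜) (n m : ℕ) :
    (concat W (n+1) m).hom = (α_ W (pow W n) (pow W m)).hom ≫ (W ◁ (concat W n m).hom) ≫
      eqToHom (congrArg (pow W) (Nat.succ_add n m).symm) := by
  simp [concat]; rfl

lemma concat_succ_inv (W : 𝒜) (n m : ℕ) :
    (concat W (n+1) m).inv = eqToHom (congrArg (pow W) (Nat.succ_add n m)) ≫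
      (W ◁ (concat W n m).inv) ≫ (α_ W (pow W n) (pow W m)).inv := by
  simp [concat]
  exact Category.assoc _ _ _

lemma ins_concat (i m j : ℕ) :
    ins V (i+m) (i+j) = (concat (Vp V) i m).inv ≫ (pow (Vp V) i ◁ ins V m j) ≫
      (concat (Vp V) i (m+1)).hom := by
  induction i with
  | zero =>
    rw [ins_congr V (Nat.zero_add m) (Nat.zero_add j), concat_zero_inv, concat_zero_hom]
    erw [Category.assoc, ← MonoidalCategory.leftUnitor_inv_naturality_assoc, Iso.inv_hom_id_assoc]
    rfl
  | succ i ih =>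
    rw [ins_congr V (Nat.succ_add i m) (Nat.succ_add i j), ins_succ, ih,
      concat_succ_inv, concat_succ_hom]
    obtain ⟨f, hf⟩ : ∃ f : pow (Vp V) m ⟶ Vp V ⊗ pow (Vp V) m, ins V m j = f := ⟨ins V m j, rfl⟩
    erw [hf]
    dsimp only [pow, Vob] at *
    simp [MonoidalCategory.whiskerLeft_comp, MonoidalCategory.whiskerLeft_eqToHom, eqToHom_trans,
      eqToHom_refl]
/-- `p₀ = η ▷ -` insertion at position 0 of a `V₊`-slot. -/
noncomputable def pzero (V : 𝒜) : Vp V ⟶ Vp V ⊗ Vp V := (λ_ (Vp V)).inv ≫ (etaV V ▷ Vp V)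

/-- `p₁ = - ◁ η` insertion at position 1 of a `V₊`-slot. -/
noncomputable def pone (V : 𝒜) : Vp V ⟶ Vp V ⊗ Vp V := (ρ_ (Vp V)).inv ≫ (Vp V ◁ etaV V)

/-- the iso `V₊ ⊗ V₊ ⟶ V₂`. -/
noncomputable def nuV (V : 𝒜) : Vp V ⊗ Vp V ⟶ Vob V 2 := Vp V ◁ (ρ_ (Vp V)).inv

lemma ins_slot_zero (k : ℕ) :
    ins V (k+1) 0 = (pzero V ▷ pow (Vp V) k) ≫ (α_ (Vp V) (Vp V) (pow (Vp V) k)).hom := by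
  rw [ins_zero, pzero]
  show (λ_ (Vp V ⊗ pow (Vp V) k)).inv ≫ (etaV V ▷ (Vp V ⊗ pow (Vp V) k)) = _
  rw [MonoidalCategory.leftUnitor_tensor_inv, MonoidalCategory.comp_whiskerRight,
    Category.assoc, Category.assoc, ← MonoidalCategory.associator_naturality_left]

lemma ins_slot_one (k : ℕ) :
    ins V (k+1) 1 = (pone V ▷ pow (Vp V) k) ≫ (α_ (Vp V) (Vp V) (pow (Vp V) k)).hom := by
  rw [show ins V (k+1) 1 = Vp V ◁ ins V k 0 from rfl, ins_zero, pone,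
    MonoidalCategory.comp_whiskerRight, Category.assoc,
    MonoidalCategory.associator_naturality_middle]
  have tr : ((ρ_ (Vp V)).inv ▷ pow (Vp V) k) ≫ (α_ (Vp V) (𝟙_ 𝒜) (pow (Vp V) k)).hom =
      Vp V ◁ (λ_ (pow (Vp V) k)).inv := by coherence
  rw [← Category.assoc, tr, ← MonoidalCategory.whiskerLeft_comp]
  rfl

/-- τ'' : the difference before the `ν` identification. -/
noncomputable def tauPre (V : 𝒜) : V ⟶ Vp V ⊗ Vp V :=
  (λ_ V).inv ≫ ((biprod.inl : 𝟙_ 𝒜 ⟶ Vp V) ⊗ₘ (biprod.inr : V ⟶ Vp V)) -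
    (ρ_ V).inv ≫ ((biprod.inr : V ⟶ Vp V) ⊗ₘ (biprod.inl : 𝟙_ 𝒜 ⟶ Vp V))

/-- the projection `V₊ ⟶ V`. -/
noncomputable def sndV (V : 𝒜) : Vp V ⟶ V := biprod.snd

lemma tauV_eq : tauV V = tauPre V ≫ nuV V := rfl

lemma pzero_eq : pzero V = pone V + sndV V ≫ tauPre V := by
  apply biprod.hom_ext'
  · have h1 : (biprod.inl : 𝟙_ 𝒜 ⟶ 𝟙_ 𝒜 ⊞ V) ≫ sndV V = 0 := biprod.inl_snd
    dsimp only [pzero, pone, sndV, tauPre, etaV] at h1 ⊢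
    erw [Preadditive.comp_add, ← Category.assoc biprod.inl biprod.snd, h1, zero_comp, add_zero]
    erw [MonoidalCategory.leftUnitor_inv_naturality_assoc,
      MonoidalCategory.rightUnitor_inv_naturality_assoc, MonoidalCategory.unitors_inv_equal,
      ← MonoidalCategory.tensorHom_def', ← MonoidalCategory.tensorHom_def]
    rfl
  · have h1 : (biprod.inr : V ⟶ 𝟙_ 𝒜 ⊞ V) ≫ sndV V = 𝟙 V := biprod.inr_snd
    dsimp only [pzero, pone, sndV, tauPre, etaV] at h1 ⊢
    erw [Preadditive.comp_add, ← Category.assoc biprod.inr biprod.snd, h1, Category.id_comp]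
    erw [MonoidalCategory.leftUnitor_inv_naturality_assoc,
      MonoidalCategory.rightUnitor_inv_naturality_assoc,
      ← MonoidalCategory.tensorHom_def', ← MonoidalCategory.tensorHom_def]
    exact (add_sub_cancel _ _).symm

lemma m1_desc : biprod.lift (sndV V) (pone V ≫ nuV V) ≫ biprod.desc (tauV V) (𝟙 (Vob V 2)) =
    pzero V ≫ nuV V := by
  rw [biprod.lift_desc, Category.comp_id, tauV_eq, pzero_eq, Preadditive.add_comp,
    ← Category.assoc]
  abel

lemma m2_desc (y : Vp V ⟶ Vob V 2) :
    biprod.lift (0 : Vp V ⟶ V) y ≫ biprod.desc (tauV V) (𝟙 (Vob V 2)) = y := by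
  rw [biprod.lift_desc]; simp
lemma nu_concat (k : ℕ) :
    (nuV V ▷ pow (Vp V) k) ≫ (concat (Vp V) 2 k).hom =
    (α_ (Vp V) (Vp V) (pow (Vp V) k)).hom ≫
      eqToHom (congrArg (pow (Vp V)) (by omega : k + 2 = 2 + k)) := by
  rw [concat_succ_hom (Vp V) 1 k, concat_succ_hom (Vp V) 0 k, concat_zero_hom]
  have step1 : (nuV V ▷ pow (Vp V) k) ≫ (α_ (Vp V) (pow (Vp V) 1) (pow (Vp V) k)).hom =
      (α_ (Vp V) (Vp V) (pow (Vp V) k)).hom ≫ (Vp V ◁ ((ρ_ (Vp V)).inv ▷ pow (Vp V) k)) := by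
    show ((Vp V ◁ (ρ_ (Vp V)).inv) ▷ pow (Vp V) k) ≫
        (α_ (Vp V) (Vp V ⊗ 𝟙_ 𝒜) (pow (Vp V) k)).hom = _
    rw [MonoidalCategory.associator_naturality_middle]
  have step2 : ((ρ_ (Vp V)).inv ▷ pow (Vp V) k) ≫ (α_ (Vp V) (pow (Vp V) 0) (pow (Vp V) k)).hom =
      Vp V ◁ (λ_ (pow (Vp V) k)).inv := by
    show ((ρ_ (Vp V)).inv ▷ pow (Vp V) k) ≫ (α_ (Vp V) (𝟙_ 𝒜) (pow (Vp V) k)).hom = _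
    coherence
  erw [← Category.assoc, step1, Category.assoc]
  congr 1
  erw [← MonoidalCategory.whiskerLeft_comp_assoc]
  erw [← Category.assoc ((ρ_ (Vp V)).inv ▷ pow (Vp V) k), step2]
  erw [← MonoidalCategory.whiskerLeft_comp_assoc (Vp V) (λ_ _).inv, Iso.inv_hom_id_assoc]
  erw [MonoidalCategory.whiskerLeft_eqToHom, eqToHom_trans, MonoidalCategory.whiskerLeft_eqToHom,
    eqToHom_trans]
lemma kill (n i k : ℕ) (hi : i < n - 1) (hk : n - 2 - i = k) {D : 𝒜}
    (q : D ⟶ Vob V i ⊗ ((V ⊞ Vob V 2) ⊗ Vob V k))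
    (hq : q ≫ (Vob V i ◁ ((biprod.snd : V ⊞ Vob V 2 ⟶ Vob V 2) ▷ Vob V k)) = 0)
    (hik : i + (2 + k) = n) :
    q ≫ (Vob V i ◁ (biprod.desc (tauV V) (𝟙 (Vob V 2)) ▷ Vob V k)) ≫
      (Vob V i ◁ (concat (Vp V) 2 k).hom) ≫ (concat (Vp V) i (2 + k)).hom ≫
      eqToHom (congrArg (Vob V) hik) ≫ projV V n = 0 := by
  subst hk
  have key : rmap V i (n - 2 - i) ≫ eqToHom (congrArg (Vob V) hik) ≫ projV V n = 0 := by
    have h2 : Sigma.ι (fun b : Fin (n-1) => Kob V b.val (n - 2 - b.val)) ⟨i, hi⟩ ≫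
        bigR V n ≫ projV V n = 0 := by
      erw [cokernel.condition, comp_zero]
    rw [bigR] at h2
    rw [← Category.assoc, Sigma.ι_desc] at h2
    simpa [Category.assoc] using h2
  have hlift := (kernel.lift_ι (Vob V i ◁ ((biprod.snd : V ⊞ Vob V 2 ⟶ Vob V 2) ▷
      Vob V (n - 2 - i))) q hq).symm
  calc q ≫ (Vob V i ◁ (biprod.desc (tauV V) (𝟙 (Vob V 2)) ▷ Vob V (n - 2 - i))) ≫
      (Vob V i ◁ (concat (Vp V) 2 (n - 2 - i)).hom) ≫ (concat (Vp V) i (2 + (n - 2 - i))).hom ≫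
      eqToHom (congrArg (Vob V) hik) ≫ projV V n
      = kernel.lift _ q hq ≫ rmap V i (n - 2 - i) ≫ eqToHom (congrArg (Vob V) hik) ≫
        projV V n := by
        conv_rhs => rw [rmap]
        erw [Category.assoc (kernel.ι _), kernel.lift_ι_assoc, Category.assoc (Vob V i ◁ _),
          Category.assoc (Vob V i ◁ _)]
        rfl
    _ = 0 := by erw [key, comp_zero]
lemma rmap_ins_end (j m n : ℕ) (hn : j + (2 + m) = n) :
    rmap V j m ≫ eqToHom (congrArg (Vob V) hn) ≫ ins V n n ≫ projV V (n+1) = 0 := by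
  have hins : eqToHom (congrArg (Vob V) hn) ≫ ins V n n =
      ins V (j+(2+m)) (j+(2+m)) ≫ eqToHom (congrArg (Vob V) (congrArg (· + 1) hn)) := by
    subst hn; simp
  rw [reassoc_of% hins]
  have h1 : (concat (Vp V) j (2+m)).hom ≫ ins V (j+(2+m)) (j+(2+m)) =
      (Vob V j ◁ ins V (2+m) (2+m)) ≫ (concat (Vp V) j (2+(m+1))).hom := by
    erw [ins_concat V j (2+m) (2+m), Iso.hom_inv_id_assoc]; rfl
  have h2 : (concat (Vp V) 2 m).hom ≫ ins V (2+m) (2+m) =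
      (Vob V 2 ◁ ins V m m) ≫ (concat (Vp V) 2 (m+1)).hom := by
    erw [ins_concat V 2 m m, Iso.hom_inv_id_assoc]; rfl
  have h3 : ((biprod.desc (tauV V) (𝟙 (Vob V 2)) : V ⊞ Vob V 2 ⟶ Vob V 2) ▷ Vob V m) ≫
      (Vob V 2 ◁ ins V m m) =
      ((V ⊞ Vob V 2) ◁ ins V m m) ≫ (biprod.desc (tauV V) (𝟙 (Vob V 2)) ▷ Vob V (m+1)) :=
    (MonoidalCategory.whisker_exchange _ _).symm
  have hq : (kernel.ι (Vob V j ◁ ((biprod.snd : V ⊞ Vob V 2 ⟶ Vob V 2) ▷ Vob V m)) ≫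
      (Vob V j ◁ ((V ⊞ Vob V 2) ◁ ins V m m))) ≫
      (Vob V j ◁ ((biprod.snd : V ⊞ Vob V 2 ⟶ Vob V 2) ▷ Vob V (m+1))) = 0 := by
    rw [Category.assoc, ← MonoidalCategory.whiskerLeft_comp,
      MonoidalCategory.whisker_exchange, MonoidalCategory.whiskerLeft_comp,
      kernel.condition_assoc, zero_comp]
  have inner : (biprod.desc (tauV V) (𝟙 (Vob V 2)) ▷ Vob V m) ≫ (concat (Vp V) 2 m).hom ≫
      ins V (2+m) (2+m) = ((V ⊞ Vob V 2) ◁ ins V m m) ≫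
      ((biprod.desc (tauV V) (𝟙 (Vob V 2)) : V ⊞ Vob V 2 ⟶ Vob V 2) ▷ Vob V (m+1)) ≫
      (concat (Vp V) 2 (m+1)).hom := by
    erw [h2, reassoc_of% h3]; rfl
  have hkill := kill V (n+1) j (m+1) (by omega) (by omega) _ hq (by omega)
  rw [rmap]
  erw [Category.assoc (kernel.ι _), Category.assoc (Vob V j ◁ _), Category.assoc (Vob V j ◁ _)]
  erw [← Category.assoc (concat (Vp V) j (2+m)).hom, h1,
    Category.assoc (Vob V j ◁ ins V (2+m) (2+m))]
  erw [← MonoidalCategory.whiskerLeft_comp_assoc, ← MonoidalCategory.whiskerLeft_comp_assoc]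
  erw [Category.assoc (_ ▷ Vob V m)]
  erw [inner]
  erw [MonoidalCategory.whiskerLeft_comp_assoc, MonoidalCategory.whiskerLeft_comp_assoc]
  erw [Category.assoc (kernel.ι _)] at hkill
  exact hkill
lemma whisker_eqToHom_concat (s : ℕ) {a b : ℕ} (h : a = b) :
    (Vob V s ◁ eqToHom (congrArg (pow (Vp V)) h)) ≫ (concat (Vp V) s b).hom =
    (concat (Vp V) s a).hom ≫ eqToHom (congrArg (Vob V) (congrArg (s + ·) h)) := by
  subst h; simp
  erw [Category.id_comp, eqToHom_refl, Category.comp_id]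

lemma ins_diff (n i : ℕ) (h : i + 1 ≤ n) :
    (ins V n i - ins V n (i+1)) ≫ projV V (n+1) = 0 := by
  obtain ⟨k, hk⟩ : ∃ k, n = i + (k+1) := ⟨n - i - 1, by omega⟩
  subst hk
  have hA : ins V (i+(k+1)) i =
      (concat (Vp V) i (k+1)).inv ≫ (Vob V i ◁ ins V (k+1) 0) ≫
        (concat (Vp V) i (k+2)).hom := by
    exact ins_concat V i (k+1) 0
  have hB : ins V (i+(k+1)) (i+1) =
      (concat (Vp V) i (k+1)).inv ≫ (Vob V i ◁ ins V (k+1) 1) ≫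
        (concat (Vp V) i (k+2)).hom :=
    ins_concat V i (k+1) 1
  rw [hA, hB]
  have halg : ((concat (Vp V) i (k+1)).inv ≫ (Vob V i ◁ ins V (k+1) 0) ≫
        (concat (Vp V) i (k+2)).hom -
      (concat (Vp V) i (k+1)).inv ≫ (Vob V i ◁ ins V (k+1) 1) ≫
        (concat (Vp V) i (k+2)).hom) ≫ projV V (i+(k+1)+1) =
      (concat (Vp V) i (k+1)).inv ≫
        (((Vob V i ◁ ins V (k+1) 0) - (Vob V i ◁ ins V (k+1) 1)) ≫
          (concat (Vp V) i (k+2)).hom ≫ projV V (i+(k+1)+1)) := by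
    erw [Preadditive.sub_comp, Preadditive.sub_comp, Preadditive.comp_sub, Category.assoc,
      Category.assoc, Category.assoc, Category.assoc]
    rfl
  erw [halg]
  suffices hmain : ((Vob V i ◁ ins V (k+1) 0) - (Vob V i ◁ ins V (k+1) 1)) ≫
      (concat (Vp V) i (k+2)).hom ≫ projV V (i+(k+1)+1) = 0 by
    erw [hmain, comp_zero]; rfl
  have hrm : ∀ (pf : Vob V (i+(k+2)) = Vob V (i+(k+1)+1)),
      eqToHom pf ≫ projV V (i+(k+1)+1) = projV V (i+(k+1)+1) := by
    intro pf
    have e : eqToHom pf = 𝟙 (Vob V (i+(k+1)+1)) := eqToHom_refl _ _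
    rw [e]; exact Category.id_comp _
  have hik : i + (2 + k) = i + (k+1) + 1 := by omega
  have hp : k + 2 = 2 + k := by omega
  have nuc : ((nuV V : Vp V ⊗ Vp V ⟶ Vob V 2) ▷ Vob V k) ≫ (concat (Vp V) 2 k).hom =
      (α_ (Vp V) (Vp V) (pow (Vp V) k)).hom ≫ eqToHom (congrArg (pow (Vp V)) hp) := nu_concat V k
  have path : ∀ p : Vp V ⟶ Vp V ⊗ Vp V,
      (Vob V i ◁ ((p ≫ nuV V) ▷ Vob V k)) ≫ (Vob V i ◁ (concat (Vp V) 2 k).hom) ≫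
        (concat (Vp V) i (2+k)).hom ≫ eqToHom (congrArg (Vob V) hik) ≫ projV V (i+(k+1)+1)
      = (Vob V i ◁ ((p ▷ Vob V k) ≫ (α_ (Vp V) (Vp V) (pow (Vp V) k)).hom)) ≫
        (concat (Vp V) i (k+2)).hom ≫ projV V (i+(k+1)+1) := by
    intro p
    erw [← MonoidalCategory.whiskerLeft_comp_assoc]
    erw [show ((p ≫ nuV V) ▷ Vob V k) ≫ (concat (Vp V) 2 k).hom =
        ((p ▷ Vob V k) ≫ (α_ (Vp V) (Vp V) (pow (Vp V) k)).hom) ≫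
          eqToHom (congrArg (pow (Vp V)) hp) from by
      erw [MonoidalCategory.comp_whiskerRight, Category.assoc, nuc]
      exact (Category.assoc _ _ _).symm]
    erw [MonoidalCategory.whiskerLeft_comp, Category.assoc]
    erw [← Category.assoc (Vob V i ◁ eqToHom _), whisker_eqToHom_concat V i hp,
      Category.assoc (concat (Vp V) i (k+2)).hom]
    erw [eqToHom_trans_assoc, hrm]; rfl
  have hq : ((Vob V i ◁ (biprod.lift (sndV V) (pone V ≫ nuV V) ▷ Vob V k)) -
      (Vob V i ◁ (biprod.lift (0 : Vp V ⟶ V) (pone V ≫ nuV V) ▷ Vob V k))) ≫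
      (Vob V i ◁ ((biprod.snd : V ⊞ Vob V 2 ⟶ Vob V 2) ▷ Vob V k)) = 0 := by
    rw [Preadditive.sub_comp, ← MonoidalCategory.whiskerLeft_comp,
      ← MonoidalCategory.whiskerLeft_comp, ← MonoidalCategory.comp_whiskerRight,
      ← MonoidalCategory.comp_whiskerRight, biprod.lift_snd, biprod.lift_snd, sub_self]
  have hkill := kill V (i+(k+1)+1) i k (by omega) (by omega) _ hq hik
  rw [Preadditive.sub_comp] at hkill
  have merge : ∀ (mm : Vp V ⟶ V ⊞ Vob V 2),
      (Vob V i ◁ (mm ▷ Vob V k)) ≫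
        (Vob V i ◁ ((biprod.desc (tauV V) (𝟙 (Vob V 2)) : V ⊞ Vob V 2 ⟶ Vob V 2) ▷ Vob V k)) =
      Vob V i ◁ ((mm ≫ biprod.desc (tauV V) (𝟙 (Vob V 2))) ▷ Vob V k) := by
    intro mm
    rw [← MonoidalCategory.whiskerLeft_comp, ← MonoidalCategory.comp_whiskerRight]
  rw [reassoc_of% (merge (biprod.lift (sndV V) (pone V ≫ nuV V))),
    reassoc_of% (merge (biprod.lift (0 : Vp V ⟶ V) (pone V ≫ nuV V))),
    m1_desc, m2_desc, path (pzero V), path (pone V)] at hkill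
  rw [ins_slot_zero, ins_slot_one, Preadditive.sub_comp]
  exact hkill
lemma ins_proj_chain (n : ℕ) : ∀ d i, i + d = n →
    ins V n i ≫ projV V (n+1) = ins V n n ≫ projV V (n+1) := by
  intro d
  induction d with
  | zero =>
    intro i h
    have : i = n := by omega
    subst this; rfl
  | succ d ih =>
    intro i h
    have h1 := ins_diff V n i (by omega)
    rw [Preadditive.sub_comp] at h1
    rw [sub_eq_zero.mp h1]
    exact ih (i+1) (by omega)

lemma bigR_ins_end (n : ℕ) : bigR V n ≫ ins V n n ≫ projV V (n+1) = 0 := by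
  rw [bigR, ← Category.assoc]
  apply Limits.colimit.hom_ext
  intro b
  obtain ⟨j, hj⟩ := b
  simp only [Limits.colimit.ι_desc_assoc, Cofan.mk_ι_app, Category.assoc, comp_zero]
  exact rmap_ins_end V j (n - 2 - j) n (by omega)

end Aux

/-- in a monoidal abelian category admitting sequential colimits,
whose monoidal product preserves sequential colimits and reflexive
coequalizers, all the degeneracy maps `η_i : Vₙ ⟶ V_{n+1}` induce one and the
same map `η̃ : Ṽₙ ⟶ Ṽ_{n+1}` on the quotients. -/
theorem statement13 {𝒜 : Type*} [Category 𝒜] [Abelian 𝒜] [MonoidalCategory 𝒜]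
    [HasColimitsOfShape ℕ 𝒜]
    (hrefl : ∀ X : 𝒜, PreservesReflexiveCoequalizersFun (tensorLeft X) ∧
      PreservesReflexiveCoequalizersFun (tensorRight X))
    (hseq : ∀ X : 𝒜, PreservesColimitsOfShape ℕ (tensorLeft X) ∧
      PreservesColimitsOfShape ℕ (tensorRight X))
    (V : 𝒜) (n : ℕ) :
    ∃! e : Vtil V n ⟶ Vtil V (n + 1),
      ∀ i ≤ n, projV V n ≫ e = ins V n i ≫ projV V (n + 1) := by
  have hepi : Epi (projV V n) := by
    show Epi (cokernel.π (bigR V n)); infer_instance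
  refine ⟨cokernel.desc (bigR V n) (ins V n n ≫ projV V (n+1)) (bigR_ins_end V n), ?_, ?_⟩
  · intro i hi
    show projV V n ≫ _ = _
    erw [projV, cokernel.π_desc]
    exact (ins_proj_chain V n (n - i) i (by omega)).symm
  · intro e' he'
    refine (cancel_epi (projV V n)).mp ?_
    rw [he' n (le_refl n)]
    show _ = cokernel.π (bigR V n) ≫ _
    erw [cokernel.π_desc]
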